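/- Let n ≥ 2 and let ∇ = ∇⁰ + Γ be a symplectic connection on (ℝ^{2n},Ω) of Ricci type, with Ricci tensor r. Then there exists a smooth 1-form u : ℝ^{2n} → V* such that for all x ∈ ℝ^{2n} and all X,Y,Z ∈ V: (∇_X r)(x)(Y,Z) = (1/(2n+1))·(Ω(X,Y)·u(x)(Z) + Ω(X,Z)·u(x)(Y)). -/

import Mathlib

noncomputable section

/-- The standard symplectic form on `ℝ^{2n}`. -/
def Omega (n : ℕ) (x y : Fin (2*n) → ℝ) : ℝ :=
  ∑ i : Fin n, (x ⟨i.1, by have := i.isLt; omega⟩ * y ⟨n + i.1, by have := i.isLt; omega⟩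
    - x ⟨n + i.1, by have := i.isLt; omega⟩ * y ⟨i.1, by have := i.isLt; omega⟩)

/-- The curvature `R(x)(X,Y) = (D_XΓ)(x)(Y) − (D_YΓ)(x)(X) + Γ(x)(X)∘Γ(x)(Y) − Γ(x)(Y)∘Γ(x)(X)`
of the symplectic connection `∇ = ∇⁰ + Γ` on `ℝ^{2n}`. -/
def curv (n : ℕ) (Γ : (Fin (2*n) → ℝ) → (Fin (2*n) → ℝ) →L[ℝ] (Fin (2*n) → ℝ) →L[ℝ] (Fin (2*n) → ℝ))
    (x X Y : Fin (2*n) → ℝ) : (Fin (2*n) → ℝ) →L[ℝ] (Fin (2*n) → ℝ) :=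
  fderiv ℝ Γ x X Y - fderiv ℝ Γ x Y X + (Γ x X).comp (Γ x Y) - (Γ x Y).comp (Γ x X)

/-- The Ricci tensor `r(x)(X,Y) = Tr(Z ↦ R(x)(X,Z)Y)` (trace computed in the
standard basis `e_a = Pi.single a 1` of `ℝ^{2n}`). -/
def ricci (n : ℕ) (Γ : (Fin (2*n) → ℝ) → (Fin (2*n) → ℝ) →L[ℝ] (Fin (2*n) → ℝ) →L[ℝ] (Fin (2*n) → ℝ))
    (x X Y : Fin (2*n) → ℝ) : ℝ :=
  ∑ a : Fin (2*n), curv n Γ x X (Pi.single a 1) Y a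

/-- `∇` is of Ricci type: the curvature equals its Ricci part `E`. -/
def IsRicciType (n : ℕ)
    (Γ : (Fin (2*n) → ℝ) → (Fin (2*n) → ℝ) →L[ℝ] (Fin (2*n) → ℝ) →L[ℝ] (Fin (2*n) → ℝ)) : Prop :=
  ∀ x X Y Z T, Omega n (curv n Γ x X Y Z) T =
    -(1/(2*((n:ℝ)+1))) * (2 * Omega n X Y * ricci n Γ x Z T
      + Omega n X Z * ricci n Γ x Y T + Omega n X T * ricci n Γ x Y Z
      - Omega n Y Z * ricci n Γ x X T - Omega n Y T * ricci n Γ x X Z)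

/-- The covariant derivative of the Ricci tensor:
`(∇_X r)(x)(Y,Z) = D_X(r(·)(Y,Z))(x) − r(x)(Γ(x)(X)Y,Z) − r(x)(Y,Γ(x)(X)Z)`. -/
def nablaRicci (n : ℕ)
    (Γ : (Fin (2*n) → ℝ) → (Fin (2*n) → ℝ) →L[ℝ] (Fin (2*n) → ℝ) →L[ℝ] (Fin (2*n) → ℝ))
    (x X Y Z : Fin (2*n) → ℝ) : ℝ :=
  fderiv ℝ (fun p => ricci n Γ p Y Z) x X - ricci n Γ x (Γ x X Y) Z - ricci n Γ x Y (Γ x X Z)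

set_option maxHeartbeats 1600000

namespace Aux

variable {n : ℕ}

abbrev V (n : ℕ) := Fin (2*n) → ℝ

local instance instA {n : ℕ} : NormedAddCommGroup (V n →L[ℝ] V n) := inferInstance
local instance instB {n : ℕ} : NormedSpace ℝ (V n →L[ℝ] V n) := inferInstance
local instance instC {n : ℕ} : NormedAddCommGroup (V n →L[ℝ] V n →L[ℝ] V n) := inferInstance
local instance instD {n : ℕ} : NormedSpace ℝ (V n →L[ℝ] V n →L[ℝ] V n) := inferInstance

def lo (i : Fin n) : Fin (2*n) := ⟨i.1, by have := i.isLt; omega⟩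
def hi (i : Fin n) : Fin (2*n) := ⟨n + i.1, by have := i.isLt; omega⟩

def ee (a : Fin (2*n)) : V n := Pi.single a 1

lemma ee_apply (a b : Fin (2*n)) : ee a b = if b.1 = a.1 then 1 else 0 := by
  simp [ee, Pi.single_apply, Fin.ext_iff]

lemma omega_def (x y : V n) : Omega n x y = ∑ i : Fin n, (x (lo i) * y (hi i) - x (hi i) * y (lo i)) := rfl

lemma sum_split (F : Fin (2*n) → ℝ) : ∑ a, F a = ∑ i : Fin n, (F (lo i) + F (hi i)) := by
  have h2 : 2*n = n+n := by ring
  have hc : ∀ i : Fin n, (finCongr h2).symm (Fin.castAdd n i) = lo i := by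
    intro i; ext; simp [lo]
  have hd : ∀ i : Fin n, (finCongr h2).symm (Fin.natAdd n i) = hi i := by
    intro i; ext; simp [hi]; omega
  rw [← (finCongr h2).symm.sum_comp F, Fin.sum_univ_add]
  simp only [hc, hd, Finset.sum_add_distrib]

lemma expand_lin (β : V n → ℝ) (hβ : IsLinearMap ℝ β) (X : V n) :
    β X = ∑ a, X a * β (ee a) := by
  let g := IsLinearMap.mk' β hβ
  have hX : ∑ a, X a • ee a = X := by
    have h1 : ∀ a : Fin (2*n), X a • ee a = Pi.single a (X a) := by
      intro a; rw [ee, ← Pi.single_smul]; simp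
    simp only [h1]; exact Finset.univ_sum_single X
  calc β X = g (∑ a, X a • ee a) := by rw [hX]; rfl
    _ = ∑ a, X a * β (ee a) := by rw [map_sum]; simp [g, smul_eq_mul]

lemma omega_right_lo (x : V n) (j : Fin n) : Omega n x (ee (lo j)) = -x (hi j) := by
  rw [omega_def, Finset.sum_eq_single j]
  · rw [ee_apply, ee_apply]
    rw [if_neg (by simp only [lo, hi]; omega), if_pos (by simp [lo])]; ring
  · intro i _ hij
    have hij' : i.1 ≠ j.1 := fun h => hij (Fin.ext h)
    rw [ee_apply, ee_apply]
    rw [if_neg (by simp only [lo, hi]; omega), if_neg (by simp only [lo]; omega)]; ring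
  · simp

lemma omega_right_hi (x : V n) (j : Fin n) : Omega n x (ee (hi j)) = x (lo j) := by
  rw [omega_def, Finset.sum_eq_single j]
  · rw [ee_apply, ee_apply]
    rw [if_pos (by simp [lo, hi]), if_neg (by simp only [lo, hi]; omega)]; ring
  · intro i _ hij
    have hij' : i.1 ≠ j.1 := fun h => hij (Fin.ext h)
    rw [ee_apply, ee_apply]
    rw [if_neg (by simp only [lo, hi]; omega), if_neg (by simp only [lo, hi]; omega)]; ring
  · simp

lemma omega_anti (x y : V n) : Omega n x y = -Omega n y x := by
  rw [omega_def, omega_def, ← Finset.sum_neg_distrib]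
  exact Finset.sum_congr rfl (fun i _ => by ring)

lemma omega_lo_left (x : V n) (j : Fin n) : Omega n (ee (lo j)) x = x (hi j) := by
  rw [omega_anti, omega_right_lo]; ring

lemma omega_hi_left (x : V n) (j : Fin n) : Omega n (ee (hi j)) x = -x (lo j) := by
  rw [omega_anti, omega_right_hi]

lemma omega_add_left (x y z : V n) : Omega n (x + y) z = Omega n x z + Omega n y z := by
  simp only [omega_def, Pi.add_apply, ← Finset.sum_add_distrib]
  exact Finset.sum_congr rfl (fun i _ => by ring)

lemma omega_sub_left (x y z : V n) : Omega n (x - y) z = Omega n x z - Omega n y z := by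
  simp only [omega_def, Pi.sub_apply, ← Finset.sum_sub_distrib]
  exact Finset.sum_congr rfl (fun i _ => by ring)

lemma omega_smul_left (c : ℝ) (x z : V n) : Omega n (c • x) z = c * Omega n x z := by
  simp only [omega_def, Pi.smul_apply, smul_eq_mul, Finset.mul_sum]
  exact Finset.sum_congr rfl (fun i _ => by ring)

lemma omega_add_right (x y z : V n) : Omega n z (x + y) = Omega n z x + Omega n z y := by
  simp only [omega_def, Pi.add_apply, ← Finset.sum_add_distrib]
  exact Finset.sum_congr rfl (fun i _ => by ring)

lemma omega_smul_right (c : ℝ) (x z : V n) : Omega n z (c • x) = c * Omega n z x := by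
  simp only [omega_def, Pi.smul_apply, smul_eq_mul, Finset.mul_sum]
  exact Finset.sum_congr rfl (fun i _ => by ring)

lemma omega_linear_left (z : V n) : IsLinearMap ℝ (fun x => Omega n x z) :=
  ⟨fun x y => omega_add_left x y z, fun c x => omega_smul_left c x z⟩

lemma omega_linear_right (z : V n) : IsLinearMap ℝ (fun x => Omega n z x) :=
  ⟨fun x y => omega_add_right x y z, fun c x => omega_smul_right c x z⟩

lemma omega_nondeg (v : V n) (h : ∀ T, Omega n v T = 0) : v = 0 := by
  funext a
  rcases Nat.lt_or_ge a.1 n with hlt | hge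
  · have := h (ee (hi ⟨a.1, hlt⟩))
    rw [omega_right_hi] at this
    simpa [lo] using this
  · have ha : n + (a.1 - n) < n + n := by have := a.isLt; omega
    have := h (ee (lo ⟨a.1 - n, by have := a.isLt; omega⟩))
    rw [omega_right_lo] at this
    have h2 : hi (⟨a.1 - n, by have := a.isLt; omega⟩ : Fin n) = a := by
      ext; simp [hi]; omega
    rw [h2] at this
    simpa using (neg_eq_zero.mp this)

/-- contraction lemma A -/
lemma contract_a (g : V n → ℝ) (hg : IsLinearMap ℝ g) (Y : V n) :
    ∑ i : Fin n, (Omega n Y (ee (lo i)) * g (ee (hi i)) - Omega n Y (ee (hi i)) * g (ee (lo i)))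
      = -g Y := by
  have : ∀ i : Fin n,
      Omega n Y (ee (lo i)) * g (ee (hi i)) - Omega n Y (ee (hi i)) * g (ee (lo i))
      = -(Y (hi i) * g (ee (hi i)) + Y (lo i) * g (ee (lo i))) := by
    intro i; rw [omega_right_lo, omega_right_hi]; ring
  rw [Finset.sum_congr rfl (fun i _ => this i), Finset.sum_neg_distrib, neg_inj]
  rw [expand_lin g hg Y, sum_split (fun a => Y a * g (ee a))]
  exact Finset.sum_congr rfl (fun i _ => by ring)

/-- contraction lemma B -/
lemma contract_b (g : V n → ℝ) (hg : IsLinearMap ℝ g) (Y : V n) :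
    ∑ i : Fin n, (g (ee (lo i)) * Omega n Y (ee (hi i)) - g (ee (hi i)) * Omega n Y (ee (lo i)))
      = g Y := by
  have : ∀ i : Fin n,
      g (ee (lo i)) * Omega n Y (ee (hi i)) - g (ee (hi i)) * Omega n Y (ee (lo i))
      = Y (lo i) * g (ee (lo i)) + Y (hi i) * g (ee (hi i)) := by
    intro i; rw [omega_right_lo, omega_right_hi]; ring
  rw [Finset.sum_congr rfl (fun i _ => this i)]
  rw [expand_lin g hg Y, sum_split (fun a => Y a * g (ee a))]

lemma omega_lo_hi (i : Fin n) : Omega n (ee (lo i)) (ee (hi i)) = 1 := by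
  rw [omega_right_hi, ee_apply, if_pos rfl]

lemma omega_hi_lo (i : Fin n) : Omega n (ee (hi i)) (ee (lo i)) = -1 := by
  rw [omega_anti, omega_lo_hi]

variable (Γ : V n → V n →L[ℝ] V n →L[ℝ] V n)

def omL (n : ℕ) (T : V n) : V n →L[ℝ] ℝ :=
  ∑ i : Fin n, (T (hi i) • ContinuousLinearMap.proj (R := ℝ) (φ := fun _ : Fin (2*n) => ℝ) (lo i)
    - T (lo i) • ContinuousLinearMap.proj (hi i))

lemma omL_apply (T v : V n) : omL n T v = Omega n v T := by
  simp only [omL, Omega, ContinuousLinearMap.sum_apply, ContinuousLinearMap.sub_apply,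
    ContinuousLinearMap.smul_apply, ContinuousLinearMap.proj_apply, smul_eq_mul]
  exact Finset.sum_congr rfl (fun i _ => by simp only [lo, hi]; ring)

variable (Γ : V n → V n →L[ℝ] V n →L[ℝ] V n)

lemma hasFDerivCurv (hΓ : ContDiff ℝ (⊤:ℕ∞) Γ) (x Y Z W T : V n) (X : V n) :
    fderiv ℝ (fun p => Omega n (curv n Γ p Y Z W) T) x X =
      Omega n (fderiv ℝ (fderiv ℝ Γ) x X Y Z W - fderiv ℝ (fderiv ℝ Γ) x X Z Y W
        + fderiv ℝ Γ x X Y (Γ x Z W) + Γ x Y (fderiv ℝ Γ x X Z W)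
        - fderiv ℝ Γ x X Z (Γ x Y W) - Γ x Z (fderiv ℝ Γ x X Y W)) T := by
  have hΓd : ∀ p, HasFDerivAt Γ (fderiv ℝ Γ p) p := fun p =>
    (hΓ.differentiable (by simp) p).hasFDerivAt
  have hF : ContDiff ℝ (⊤:ℕ∞) (fderiv ℝ Γ) := hΓ.fderiv_right (m := ((⊤:ℕ∞) : WithTop ℕ∞)) (by exact le_of_eq (by norm_cast))
  have hFd : HasFDerivAt (fderiv ℝ Γ) (fderiv ℝ (fderiv ℝ Γ) x) x :=
    (hF.differentiable (by simp) x).hasFDerivAt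
  have h1 : HasFDerivAt (fun p => fderiv ℝ Γ p Y) _ x := hFd.clm_apply (hasFDerivAt_const Y x)
  have h2 : HasFDerivAt (fun p => fderiv ℝ Γ p Y Z) _ x := h1.clm_apply (hasFDerivAt_const Z x)
  have h1' : HasFDerivAt (fun p => fderiv ℝ Γ p Z) _ x := hFd.clm_apply (hasFDerivAt_const Z x)
  have h2' : HasFDerivAt (fun p => fderiv ℝ Γ p Z Y) _ x := h1'.clm_apply (hasFDerivAt_const Y x)
  have g1 : HasFDerivAt (fun p => Γ p Y) _ x := (hΓd x).clm_apply (hasFDerivAt_const Y x)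
  have g1' : HasFDerivAt (fun p => Γ p Z) _ x := (hΓd x).clm_apply (hasFDerivAt_const Z x)
  have c1 : HasFDerivAt (fun p => (Γ p Y).comp (Γ p Z)) _ x := g1.clm_comp g1'
  have c2 : HasFDerivAt (fun p => (Γ p Z).comp (Γ p Y)) _ x := g1'.clm_comp g1
  have hcurv : HasFDerivAt (fun p => curv n Γ p Y Z) _ x := ((h2.sub h2').add c1).sub c2
  have happ : HasFDerivAt (fun p => curv n Γ p Y Z W) _ x := hcurv.clm_apply (hasFDerivAt_const W x)
  have homega : HasFDerivAt (fun p => omL n T (curv n Γ p Y Z W)) _ x :=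
    (hasFDerivAt_const (omL n T) x).clm_apply happ
  have hfun : (fun p => Omega n (curv n Γ p Y Z W) T) = fun p => omL n T (curv n Γ p Y Z W) := by
    funext p; rw [omL_apply]
  rw [hfun, homega.fderiv]
  simp only [ContinuousLinearMap.add_apply, ContinuousLinearMap.sub_apply,
    ContinuousLinearMap.coe_comp', Function.comp_apply, ContinuousLinearMap.flip_apply,
    ContinuousLinearMap.zero_apply, ContinuousLinearMap.comp_zero, ContinuousLinearMap.zero_comp,
    ContinuousLinearMap.compL_apply, zero_add, add_zero, omL_apply]
  rw [← omL_apply, ← omL_apply]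
  congr 1
  abel
lemma curv_applyV (x X Y W : V n) : curv n Γ x X Y W =
    fderiv ℝ Γ x X Y W - fderiv ℝ Γ x Y X W + Γ x X (Γ x Y W) - Γ x Y (Γ x X W) := by
  simp [curv]

lemma curv_add1 (x X X' Y : V n) : curv n Γ x (X + X') Y = curv n Γ x X Y + curv n Γ x X' Y := by
  ext W a
  simp only [curv_applyV, map_add, ContinuousLinearMap.add_apply, Pi.add_apply,
    Pi.sub_apply, Pi.smul_apply, smul_eq_mul]
  ring

lemma curv_smul1 (x : V n) (c : ℝ) (X Y : V n) : curv n Γ x (c • X) Y = c • curv n Γ x X Y := by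
  ext W a
  simp only [curv_applyV, map_smul, ContinuousLinearMap.smul_apply, Pi.smul_apply, smul_eq_mul,
    Pi.sub_apply, Pi.add_apply]
  ring

lemma ricci_lin1 (x Y : V n) : IsLinearMap ℝ (fun X => ricci n Γ x X Y) := by
  constructor
  · intro X X'
    simp only [ricci, curv_add1, ContinuousLinearMap.add_apply, Pi.add_apply,
      Finset.sum_add_distrib]
  · intro c X
    simp only [ricci, curv_smul1, ContinuousLinearMap.smul_apply, Pi.smul_apply, smul_eq_mul,
      Finset.mul_sum]

lemma ricci_lin2 (x X : V n) : IsLinearMap ℝ (fun Y => ricci n Γ x X Y) := by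
  constructor
  · intro Y Y'
    simp only [ricci, map_add, Pi.add_apply, Finset.sum_add_distrib]
  · intro c Y
    simp only [ricci, map_smul, Pi.smul_apply, smul_eq_mul, Finset.mul_sum]

lemma contDiff_curvYapp (hΓ : ContDiff ℝ (⊤:ℕ∞) Γ) (A E B : V n) :
    ContDiff ℝ (⊤:ℕ∞) (fun p => curv n Γ p A E B) := by
  have hF : ContDiff ℝ (⊤:ℕ∞) (fderiv ℝ Γ) := hΓ.fderiv_right (m := ((⊤:ℕ∞) : WithTop ℕ∞)) (by exact le_of_eq (by norm_cast))
  have h1 : ContDiff ℝ (⊤:ℕ∞) (fun p => fderiv ℝ Γ p A E) :=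
    (hF.clm_apply contDiff_const).clm_apply contDiff_const
  have h2 : ContDiff ℝ (⊤:ℕ∞) (fun p => fderiv ℝ Γ p E A) :=
    (hF.clm_apply contDiff_const).clm_apply contDiff_const
  have g1 : ContDiff ℝ (⊤:ℕ∞) (fun p => Γ p A) := hΓ.clm_apply contDiff_const
  have g2 : ContDiff ℝ (⊤:ℕ∞) (fun p => Γ p E) := hΓ.clm_apply contDiff_const
  have hc : ContDiff ℝ (⊤:ℕ∞) (fun p => curv n Γ p A E) :=
    ((h1.sub h2).add (g1.clm_comp g2)).sub (g2.clm_comp g1)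
  exact hc.clm_apply contDiff_const

lemma contDiff_ricci (hΓ : ContDiff ℝ (⊤:ℕ∞) Γ) (A B : V n) :
    ContDiff ℝ (⊤:ℕ∞) (fun p => ricci n Γ p A B) := by
  unfold ricci
  apply ContDiff.sum
  intro a _
  exact (contDiff_const (c := ContinuousLinearMap.proj (R := ℝ)
    (φ := fun _ : Fin (2*n) => ℝ) a)).clm_apply (contDiff_curvYapp Γ hΓ A (Pi.single a 1) B)

lemma contDiff_nabla (hΓ : ContDiff ℝ (⊤:ℕ∞) Γ) (X Y Z : V n) :
    ContDiff ℝ (⊤:ℕ∞) (fun x => nablaRicci n Γ x X Y Z) := by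
  unfold nablaRicci
  have hco : ∀ (A B : V n), ContDiff ℝ (⊤:ℕ∞) (fun x => ricci n Γ x A B) :=
    fun A B => contDiff_ricci Γ hΓ A B
  have h1 : ContDiff ℝ (⊤:ℕ∞) (fun x => fderiv ℝ (fun p => ricci n Γ p Y Z) x X) :=
    ((hco Y Z).fderiv_right (by exact_mod_cast le_top)).clm_apply contDiff_const
  have hcoord : ∀ (X' Y' : V n) (b : Fin (2*n)), ContDiff ℝ (⊤:ℕ∞) (fun x => Γ x X' Y' b) := by
    intro X' Y' b
    exact (contDiff_const (c := ContinuousLinearMap.proj (R := ℝ)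
      (φ := fun _ : Fin (2*n) => ℝ) b)).clm_apply ((hΓ.clm_apply contDiff_const).clm_apply contDiff_const)
  have h2 : ContDiff ℝ (⊤:ℕ∞) (fun x => ricci n Γ x (Γ x X Y) Z) := by
    have : (fun x => ricci n Γ x (Γ x X Y) Z)
        = fun x => ∑ b, Γ x X Y b * ricci n Γ x (ee b) Z := by
      funext x
      exact expand_lin (fun W => ricci n Γ x W Z) (ricci_lin1 Γ x Z) (Γ x X Y)
    rw [this]
    exact ContDiff.sum (fun b _ => (hcoord X Y b).mul (hco (ee b) Z))
  have h3 : ContDiff ℝ (⊤:ℕ∞) (fun x => ricci n Γ x Y (Γ x X Z)) := by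
    have : (fun x => ricci n Γ x Y (Γ x X Z))
        = fun x => ∑ b, Γ x X Z b * ricci n Γ x Y (ee b) := by
      funext x
      exact expand_lin (fun W => ricci n Γ x Y W) (ricci_lin2 Γ x Y) (Γ x X Z)
    rw [this]
    exact ContDiff.sum (fun b _ => (hcoord X Z b).mul (hco Y (ee b)))
  exact (h1.sub h2).sub h3


lemma contract_c (g : V n → ℝ) (hg : IsLinearMap ℝ g) (Y : V n) :
    ∑ i : Fin n, (Omega n (ee (lo i)) Y * g (ee (hi i)) - Omega n (ee (hi i)) Y * g (ee (lo i)))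
      = g Y := by
  have h : ∀ i : Fin n,
      Omega n (ee (lo i)) Y * g (ee (hi i)) - Omega n (ee (hi i)) Y * g (ee (lo i))
      = Y (lo i) * g (ee (lo i)) + Y (hi i) * g (ee (hi i)) := by
    intro i; rw [omega_lo_left, omega_hi_left]; ring
  rw [Finset.sum_congr rfl (fun i _ => h i)]
  rw [expand_lin g hg Y, sum_split (fun a => Y a * g (ee a))]

lemma torsion (hsym₁ : ∀ x X Y Z, Omega n (Γ x X Y) Z = Omega n (Γ x Y X) Z)
    (x a b : V n) : Γ x a b = Γ x b a := by
  have h := omega_nondeg (Γ x a b - Γ x b a) (fun T => by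
    rw [omega_sub_left, hsym₁ x a b T, sub_self])
  exact sub_eq_zero.mp h

lemma bianchi (hΓ : ContDiff ℝ (⊤:ℕ∞) Γ)
    (hsym₁ : ∀ x X Y Z, Omega n (Γ x X Y) Z = Omega n (Γ x Y X) Z)
    (hsym₂ : ∀ x X Y Z, Omega n (Γ x X Y) Z = Omega n (Γ x X Z) Y)
    (x X Y Z W T : V n) :
    (fderiv ℝ (fun p => Omega n (curv n Γ p Y Z W) T) x X
      - Omega n (curv n Γ x (Γ x X Y) Z W) T - Omega n (curv n Γ x Y (Γ x X Z) W) T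
      - Omega n (curv n Γ x Y Z (Γ x X W)) T - Omega n (curv n Γ x Y Z W) (Γ x X T))
    + (fderiv ℝ (fun p => Omega n (curv n Γ p Z X W) T) x Y
      - Omega n (curv n Γ x (Γ x Y Z) X W) T - Omega n (curv n Γ x Z (Γ x Y X) W) T
      - Omega n (curv n Γ x Z X (Γ x Y W)) T - Omega n (curv n Γ x Z X W) (Γ x Y T))
    + (fderiv ℝ (fun p => Omega n (curv n Γ p X Y W) T) x Z
      - Omega n (curv n Γ x (Γ x Z X) Y W) T - Omega n (curv n Γ x X (Γ x Z Y) W) T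
      - Omega n (curv n Γ x X Y (Γ x Z W)) T - Omega n (curv n Γ x X Y W) (Γ x Z T)) = 0 := by
  have hΓd : ∀ p, HasFDerivAt Γ (fderiv ℝ Γ p) p := fun p =>
    (hΓ.differentiable (by simp) p).hasFDerivAt
  have hF : ContDiff ℝ (⊤:ℕ∞) (fderiv ℝ Γ) := hΓ.fderiv_right (m := ((⊤:ℕ∞) : WithTop ℕ∞)) (by exact le_of_eq (by norm_cast))
  have hFd : HasFDerivAt (fderiv ℝ Γ) (fderiv ℝ (fderiv ℝ Γ) x) x :=
    (hF.differentiable (by simp) x).hasFDerivAt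
  have hSsym : ∀ a b, fderiv ℝ (fderiv ℝ Γ) x a b = fderiv ℝ (fderiv ℝ Γ) x b a :=
    second_derivative_symmetric hΓd hFd
  have hT : ∀ a b, Γ x a b = Γ x b a := fun a b => torsion Γ hsym₁ x a b
  have hom : ∀ (U v w : V n), Omega n (Γ x U v) w = -Omega n v (Γ x U w) := fun U v w => by
    rw [hsym₂ x U v w, omega_anti]
  rw [hasFDerivCurv Γ hΓ x Y Z W T X, hasFDerivCurv Γ hΓ x Z X W T Y,
    hasFDerivCurv Γ hΓ x X Y W T Z]
  simp only [curv_applyV]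
  simp only [omega_sub_left, omega_add_left]
  rw [hT Y X, hT Z Y, hT X Z, hSsym Y X, hSsym Z Y, hSsym X Z]
  simp only [hom]
  ring


lemma NtRho (hΓ : ContDiff ℝ (⊤:ℕ∞) Γ)
    (hsym₂ : ∀ x X Y Z, Omega n (Γ x X Y) Z = Omega n (Γ x X Z) Y)
    (hR : IsRicciType n Γ) (x U Y Z W T : V n) :
    fderiv ℝ (fun p => Omega n (curv n Γ p Y Z W) T) x U
      - Omega n (curv n Γ x (Γ x U Y) Z W) T - Omega n (curv n Γ x Y (Γ x U Z) W) T
      - Omega n (curv n Γ x Y Z (Γ x U W)) T - Omega n (curv n Γ x Y Z W) (Γ x U T)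
    = -(1/(2*((n:ℝ)+1))) * (2 * Omega n Y Z * nablaRicci n Γ x U W T
      + Omega n Y W * nablaRicci n Γ x U Z T + Omega n Y T * nablaRicci n Γ x U Z W
      - Omega n Z W * nablaRicci n Γ x U Y T - Omega n Z T * nablaRicci n Γ x U Y W) := by
  have hom : ∀ (U' v w : V n), Omega n (Γ x U' v) w = -Omega n v (Γ x U' w) := fun U' v w => by
    rw [hsym₂ x U' v w, omega_anti]
  have hd : ∀ (A B : V n), HasFDerivAt (fun p => ricci n Γ p A B)
      (fderiv ℝ (fun p => ricci n Γ p A B) x) x := fun A B =>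
    ((contDiff_ricci Γ hΓ A B).differentiable (by simp) x).hasFDerivAt
  have hfun : (fun p => Omega n (curv n Γ p Y Z W) T)
      = fun p => -(1/(2*((n:ℝ)+1))) * (2 * Omega n Y Z * ricci n Γ p W T
        + Omega n Y W * ricci n Γ p Z T + Omega n Y T * ricci n Γ p Z W
        - Omega n Z W * ricci n Γ p Y T - Omega n Z T * ricci n Γ p Y W) := by
    funext p; exact hR p Y Z W T
  have hcomb : HasFDerivAt (fun p => -(1/(2*((n:ℝ)+1))) * (2 * Omega n Y Z * ricci n Γ p W T
        + Omega n Y W * ricci n Γ p Z T + Omega n Y T * ricci n Γ p Z W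
        - Omega n Z W * ricci n Γ p Y T - Omega n Z T * ricci n Γ p Y W)) _ x :=
    (((((hd W T).const_mul (2 * Omega n Y Z)).add ((hd Z T).const_mul (Omega n Y W))).add
      ((hd Z W).const_mul (Omega n Y T))).sub ((hd Y T).const_mul (Omega n Z W))).sub
      ((hd Y W).const_mul (Omega n Z T)) |>.const_mul (-(1/(2*((n:ℝ)+1))))
  rw [hfun, hcomb.fderiv]
  rw [hR x (Γ x U Y) Z W T, hR x Y (Γ x U Z) W T, hR x Y Z (Γ x U W) T, hR x Y Z W (Γ x U T)]
  simp only [nablaRicci, ContinuousLinearMap.smul_apply, ContinuousLinearMap.add_apply,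
    ContinuousLinearMap.sub_apply, smul_eq_mul]
  simp only [hom]
  ring

lemma star (hn : 2 ≤ n) (hΓ : ContDiff ℝ (⊤:ℕ∞) Γ)
    (hsym₁ : ∀ x X Y Z, Omega n (Γ x X Y) Z = Omega n (Γ x Y X) Z)
    (hsym₂ : ∀ x X Y Z, Omega n (Γ x X Y) Z = Omega n (Γ x X Z) Y)
    (hR : IsRicciType n Γ) (x X Y Z W T : V n) :
    (2 * Omega n Y Z * nablaRicci n Γ x X W T
      + Omega n Y W * nablaRicci n Γ x X Z T + Omega n Y T * nablaRicci n Γ x X Z W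
      - Omega n Z W * nablaRicci n Γ x X Y T - Omega n Z T * nablaRicci n Γ x X Y W)
    + (2 * Omega n Z X * nablaRicci n Γ x Y W T
      + Omega n Z W * nablaRicci n Γ x Y X T + Omega n Z T * nablaRicci n Γ x Y X W
      - Omega n X W * nablaRicci n Γ x Y Z T - Omega n X T * nablaRicci n Γ x Y Z W)
    + (2 * Omega n X Y * nablaRicci n Γ x Z W T
      + Omega n X W * nablaRicci n Γ x Z Y T + Omega n X T * nablaRicci n Γ x Z Y W
      - Omega n Y W * nablaRicci n Γ x Z X T - Omega n Y T * nablaRicci n Γ x Z X W) = 0 := by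
  have hb := bianchi Γ hΓ hsym₁ hsym₂ x X Y Z W T
  rw [NtRho Γ hΓ hsym₂ hR x X Y Z W T, NtRho Γ hΓ hsym₂ hR x Y Z X W T,
    NtRho Γ hΓ hsym₂ hR x Z X Y W T] at hb
  have hc : -(1/(2*((n:ℝ)+1))) ≠ 0 := by
    have : (0:ℝ) < (n:ℝ) + 1 := by positivity
    intro h; rw [neg_eq_zero, div_eq_zero_iff] at h
    rcases h with h | h
    · norm_num at h
    · linarith
  apply mul_left_cancel₀ hc
  rw [mul_zero]
  linear_combination hb


lemma ricci_eq_contract (x X Y : V n) : ricci n Γ x X Y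
    = ∑ i : Fin n, (Omega n (curv n Γ x X (ee (lo i)) Y) (ee (hi i))
        - Omega n (curv n Γ x X (ee (hi i)) Y) (ee (lo i))) := by
  have h : ricci n Γ x X Y = ∑ a, curv n Γ x X (ee a) Y a := rfl
  rw [h, sum_split (fun a => curv n Γ x X (ee a) Y a)]
  exact Finset.sum_congr rfl (fun i _ => by rw [omega_right_hi, omega_right_lo]; ring)

lemma ricci_symm (hR : IsRicciType n Γ) (x X₀ Y₀ : V n) :
    ricci n Γ x X₀ Y₀ = ricci n Γ x Y₀ X₀ := by
  set τ := ∑ i : Fin n, (ricci n Γ x (ee (lo i)) (ee (hi i))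
    - ricci n Γ x (ee (hi i)) (ee (lo i))) with hτ
  have hne : (2*((n:ℝ)+1)) ≠ 0 := by positivity
  have hR2 : ∀ X Y Z T : V n, (2*((n:ℝ)+1)) * Omega n (curv n Γ x X Y Z) T
      = -(2 * Omega n X Y * ricci n Γ x Z T + Omega n X Z * ricci n Γ x Y T
        + Omega n X T * ricci n Γ x Y Z - Omega n Y Z * ricci n Γ x X T
        - Omega n Y T * ricci n Γ x X Z) := by
    intro X Y Z T
    rw [hR x X Y Z T]
    field_simp
  have key : ∀ X Y : V n, (2*((n:ℝ)+1)) * ricci n Γ x X Y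
      = 2 * ricci n Γ x Y X - Omega n X Y * τ + 2*(n:ℝ)*ricci n Γ x X Y := by
    intro X Y
    have hGa : ∑ i : Fin n, (Omega n X (ee (lo i)) * ricci n Γ x Y (ee (hi i))
        - Omega n X (ee (hi i)) * ricci n Γ x Y (ee (lo i))) = -ricci n Γ x Y X :=
      contract_a (fun v => ricci n Γ x Y v) (ricci_lin2 Γ x Y) X
    have hGb : ∑ i : Fin n, (ricci n Γ x (ee (lo i)) Y * Omega n X (ee (hi i))
        - ricci n Γ x (ee (hi i)) Y * Omega n X (ee (lo i))) = ricci n Γ x X Y :=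
      contract_b (fun v => ricci n Γ x v Y) (ricci_lin1 Γ x Y) X
    have hGc : ∑ i : Fin n, (Omega n (ee (lo i)) Y * ricci n Γ x X (ee (hi i))
        - Omega n (ee (hi i)) Y * ricci n Γ x X (ee (lo i))) = ricci n Γ x X Y :=
      contract_c (fun v => ricci n Γ x X v) (ricci_lin2 Γ x X) Y
    calc (2*((n:ℝ)+1)) * ricci n Γ x X Y
        = ∑ i : Fin n, (2*((n:ℝ)+1)) * (Omega n (curv n Γ x X (ee (lo i)) Y) (ee (hi i))
            - Omega n (curv n Γ x X (ee (hi i)) Y) (ee (lo i))) := by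
          rw [ricci_eq_contract, Finset.mul_sum]
      _ = ∑ i : Fin n, -(2 * (Omega n X (ee (lo i)) * ricci n Γ x Y (ee (hi i))
              - Omega n X (ee (hi i)) * ricci n Γ x Y (ee (lo i)))
            + Omega n X Y * (ricci n Γ x (ee (lo i)) (ee (hi i))
              - ricci n Γ x (ee (hi i)) (ee (lo i)))
            + (ricci n Γ x (ee (lo i)) Y * Omega n X (ee (hi i))
              - ricci n Γ x (ee (hi i)) Y * Omega n X (ee (lo i)))
            - (Omega n (ee (lo i)) Y * ricci n Γ x X (ee (hi i))
              - Omega n (ee (hi i)) Y * ricci n Γ x X (ee (lo i)))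
            - 2 * ricci n Γ x X Y) := by
          refine Finset.sum_congr rfl (fun i _ => ?_)
          rw [mul_sub, hR2 X (ee (lo i)) Y (ee (hi i)), hR2 X (ee (hi i)) Y (ee (lo i)),
            omega_lo_hi i, omega_hi_lo i]
          ring
      _ = -(2 * (∑ i : Fin n, (Omega n X (ee (lo i)) * ricci n Γ x Y (ee (hi i))
              - Omega n X (ee (hi i)) * ricci n Γ x Y (ee (lo i))))
            + Omega n X Y * (∑ i : Fin n, (ricci n Γ x (ee (lo i)) (ee (hi i))
              - ricci n Γ x (ee (hi i)) (ee (lo i))))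
            + (∑ i : Fin n, (ricci n Γ x (ee (lo i)) Y * Omega n X (ee (hi i))
              - ricci n Γ x (ee (hi i)) Y * Omega n X (ee (lo i))))
            - (∑ i : Fin n, (Omega n (ee (lo i)) Y * ricci n Γ x X (ee (hi i))
              - Omega n (ee (hi i)) Y * ricci n Γ x X (ee (lo i))))
            - (n:ℝ) * (2 * ricci n Γ x X Y)) := by
          rw [Finset.sum_neg_distrib]
          congr 1
          rw [Finset.sum_sub_distrib, Finset.sum_sub_distrib, Finset.sum_add_distrib,
            Finset.sum_add_distrib, ← Finset.mul_sum, ← Finset.mul_sum,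
            Finset.sum_const, Finset.card_univ, Fintype.card_fin, nsmul_eq_mul]
      _ = 2 * ricci n Γ x Y X - Omega n X Y * τ + 2*(n:ℝ)*ricci n Γ x X Y := by
          rw [hGa, hGb, hGc, ← hτ]
          ring
  have hs : ∀ X Y : V n, 2*(ricci n Γ x X Y - ricci n Γ x Y X) = -(Omega n X Y) * τ := by
    intro X Y
    linear_combination (1/2 : ℝ) * key X Y - (1/2 : ℝ) * key Y X + (τ/2) * (omega_anti Y X)
  have hτ0 : τ = 0 := by
    have h1 : ∀ i : Fin n, ricci n Γ x (ee (lo i)) (ee (hi i))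
        - ricci n Γ x (ee (hi i)) (ee (lo i)) = -τ/2 := by
      intro i
      have := hs (ee (lo i)) (ee (hi i))
      rw [omega_lo_hi] at this
      linarith
    have h2 : τ = (n:ℝ) * (-τ/2) := by
      calc τ = ∑ i : Fin n, (ricci n Γ x (ee (lo i)) (ee (hi i))
          - ricci n Γ x (ee (hi i)) (ee (lo i))) := hτ
        _ = ∑ _i : Fin n, (-τ/2) := Finset.sum_congr rfl (fun i _ => h1 i)
        _ = (n:ℝ) * (-τ/2) := by
            rw [Finset.sum_const, Finset.card_univ, Fintype.card_fin, nsmul_eq_mul]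
    have h3 : τ * ((n:ℝ) + 2) = 0 := by linear_combination (2:ℝ) * h2
    rcases mul_eq_zero.mp h3 with h | h
    · exact h
    · exfalso
      have : (0:ℝ) < (n:ℝ) + 2 := by positivity
      linarith
  have := hs X₀ Y₀
  rw [hτ0] at this
  linarith


lemma nabla_symm23 (hR : IsRicciType n Γ) (x X Y Z : V n) :
    nablaRicci n Γ x X Y Z = nablaRicci n Γ x X Z Y := by
  have hfun : (fun p => ricci n Γ p Y Z) = (fun p => ricci n Γ p Z Y) :=
    funext fun p => ricci_symm Γ hR p Y Z
  show fderiv ℝ (fun p => ricci n Γ p Y Z) x X - ricci n Γ x (Γ x X Y) Z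
      - ricci n Γ x Y (Γ x X Z)
    = fderiv ℝ (fun p => ricci n Γ p Z Y) x X - ricci n Γ x (Γ x X Z) Y
      - ricci n Γ x Z (Γ x X Y)
  rw [hfun, ricci_symm Γ hR x (Γ x X Y) Z, ricci_symm Γ hR x Y (Γ x X Z)]
  ring

lemma nabla_lin1 (x Y Z : V n) : IsLinearMap ℝ (fun X => nablaRicci n Γ x X Y Z) := by
  constructor
  · intro a b
    show fderiv ℝ (fun p => ricci n Γ p Y Z) x (a + b) - ricci n Γ x (Γ x (a + b) Y) Z
        - ricci n Γ x Y (Γ x (a + b) Z)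
      = (fderiv ℝ (fun p => ricci n Γ p Y Z) x a - ricci n Γ x (Γ x a Y) Z
          - ricci n Γ x Y (Γ x a Z))
        + (fderiv ℝ (fun p => ricci n Γ p Y Z) x b - ricci n Γ x (Γ x b Y) Z
          - ricci n Γ x Y (Γ x b Z))
    have e0 : fderiv ℝ (fun p => ricci n Γ p Y Z) x (a + b)
        = fderiv ℝ (fun p => ricci n Γ p Y Z) x a + fderiv ℝ (fun p => ricci n Γ p Y Z) x b :=
      map_add _ _ _
    have eΓ : ∀ C : V n, Γ x (a + b) C = Γ x a C + Γ x b C := by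
      intro C; rw [map_add]; rfl
    have e1 : ricci n Γ x (Γ x (a + b) Y) Z
        = ricci n Γ x (Γ x a Y) Z + ricci n Γ x (Γ x b Y) Z := by
      rw [eΓ Y]; exact (ricci_lin1 Γ x Z).map_add _ _
    have e2 : ricci n Γ x Y (Γ x (a + b) Z)
        = ricci n Γ x Y (Γ x a Z) + ricci n Γ x Y (Γ x b Z) := by
      rw [eΓ Z]; exact (ricci_lin2 Γ x Y).map_add _ _
    rw [e0, e1, e2]; ring
  · intro c a
    show fderiv ℝ (fun p => ricci n Γ p Y Z) x (c • a) - ricci n Γ x (Γ x (c • a) Y) Z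
        - ricci n Γ x Y (Γ x (c • a) Z)
      = c • (fderiv ℝ (fun p => ricci n Γ p Y Z) x a - ricci n Γ x (Γ x a Y) Z
          - ricci n Γ x Y (Γ x a Z))
    have e0 : fderiv ℝ (fun p => ricci n Γ p Y Z) x (c • a)
        = c • fderiv ℝ (fun p => ricci n Γ p Y Z) x a := map_smul _ _ _
    have eΓ : ∀ C : V n, Γ x (c • a) C = c • Γ x a C := by
      intro C; rw [map_smul]; rfl
    have e1 : ricci n Γ x (Γ x (c • a) Y) Z = c * ricci n Γ x (Γ x a Y) Z := by
      rw [eΓ Y]; exact (ricci_lin1 Γ x Z).map_smul _ _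
    have e2 : ricci n Γ x Y (Γ x (c • a) Z) = c * ricci n Γ x Y (Γ x a Z) := by
      rw [eΓ Z]; exact (ricci_lin2 Γ x Y).map_smul _ _
    rw [e0, e1, e2]; simp only [smul_eq_mul]; ring

lemma nabla_lin2 (hΓ : ContDiff ℝ (⊤:ℕ∞) Γ) (x X Z : V n) :
    IsLinearMap ℝ (fun Y => nablaRicci n Γ x X Y Z) := by
  have hdiff : ∀ A B : V n, DifferentiableAt ℝ (fun p => ricci n Γ p A B) x := fun A B =>
    ((contDiff_ricci Γ hΓ A B).differentiable (by simp)) x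
  constructor
  · intro a b
    show fderiv ℝ (fun p => ricci n Γ p (a + b) Z) x X - ricci n Γ x (Γ x X (a + b)) Z
        - ricci n Γ x (a + b) (Γ x X Z)
      = (fderiv ℝ (fun p => ricci n Γ p a Z) x X - ricci n Γ x (Γ x X a) Z
          - ricci n Γ x a (Γ x X Z))
        + (fderiv ℝ (fun p => ricci n Γ p b Z) x X - ricci n Γ x (Γ x X b) Z
          - ricci n Γ x b (Γ x X Z))
    have hfun : (fun p => ricci n Γ p (a + b) Z)
        = fun p => ricci n Γ p a Z + ricci n Γ p b Z :=
      funext fun p => (ricci_lin1 Γ p Z).map_add a b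
    have e0 : fderiv ℝ (fun p => ricci n Γ p (a + b) Z) x X
        = fderiv ℝ (fun p => ricci n Γ p a Z) x X + fderiv ℝ (fun p => ricci n Γ p b Z) x X := by
      rw [hfun, fderiv_fun_add (hdiff a Z) (hdiff b Z)]; rfl
    have e1 : ricci n Γ x (Γ x X (a + b)) Z
        = ricci n Γ x (Γ x X a) Z + ricci n Γ x (Γ x X b) Z := by
      rw [map_add (Γ x X)]; exact (ricci_lin1 Γ x Z).map_add _ _
    have e2 : ricci n Γ x (a + b) (Γ x X Z)
        = ricci n Γ x a (Γ x X Z) + ricci n Γ x b (Γ x X Z) :=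
      (ricci_lin1 Γ x (Γ x X Z)).map_add _ _
    rw [e0, e1, e2]; ring
  · intro c a
    show fderiv ℝ (fun p => ricci n Γ p (c • a) Z) x X - ricci n Γ x (Γ x X (c • a)) Z
        - ricci n Γ x (c • a) (Γ x X Z)
      = c • (fderiv ℝ (fun p => ricci n Γ p a Z) x X - ricci n Γ x (Γ x X a) Z
          - ricci n Γ x a (Γ x X Z))
    have hfun : (fun p => ricci n Γ p (c • a) Z)
        = fun p => c * ricci n Γ p a Z :=
      funext fun p => (ricci_lin1 Γ p Z).map_smul c a
    have e0 : fderiv ℝ (fun p => ricci n Γ p (c • a) Z) x X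
        = c * fderiv ℝ (fun p => ricci n Γ p a Z) x X := by
      rw [hfun, fderiv_const_mul (hdiff a Z) c]; rfl
    have e1 : ricci n Γ x (Γ x X (c • a)) Z = c * ricci n Γ x (Γ x X a) Z := by
      rw [map_smul (Γ x X)]; exact (ricci_lin1 Γ x Z).map_smul _ _
    have e2 : ricci n Γ x (c • a) (Γ x X Z) = c * ricci n Γ x a (Γ x X Z) :=
      (ricci_lin1 Γ x (Γ x X Z)).map_smul _ _
    rw [e0, e1, e2]; simp only [smul_eq_mul]; ring

lemma nabla_lin3 (hΓ : ContDiff ℝ (⊤:ℕ∞) Γ) (x X Y : V n) :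
    IsLinearMap ℝ (fun Z => nablaRicci n Γ x X Y Z) := by
  have hdiff : ∀ A B : V n, DifferentiableAt ℝ (fun p => ricci n Γ p A B) x := fun A B =>
    ((contDiff_ricci Γ hΓ A B).differentiable (by simp)) x
  constructor
  · intro a b
    show fderiv ℝ (fun p => ricci n Γ p Y (a + b)) x X - ricci n Γ x (Γ x X Y) (a + b)
        - ricci n Γ x Y (Γ x X (a + b))
      = (fderiv ℝ (fun p => ricci n Γ p Y a) x X - ricci n Γ x (Γ x X Y) a
          - ricci n Γ x Y (Γ x X a))
        + (fderiv ℝ (fun p => ricci n Γ p Y b) x X - ricci n Γ x (Γ x X Y) b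
          - ricci n Γ x Y (Γ x X b))
    have hfun : (fun p => ricci n Γ p Y (a + b))
        = fun p => ricci n Γ p Y a + ricci n Γ p Y b :=
      funext fun p => (ricci_lin2 Γ p Y).map_add a b
    have e0 : fderiv ℝ (fun p => ricci n Γ p Y (a + b)) x X
        = fderiv ℝ (fun p => ricci n Γ p Y a) x X + fderiv ℝ (fun p => ricci n Γ p Y b) x X := by
      rw [hfun, fderiv_fun_add (hdiff Y a) (hdiff Y b)]; rfl
    have e1 : ricci n Γ x (Γ x X Y) (a + b)
        = ricci n Γ x (Γ x X Y) a + ricci n Γ x (Γ x X Y) b :=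
      (ricci_lin2 Γ x (Γ x X Y)).map_add _ _
    have e2 : ricci n Γ x Y (Γ x X (a + b))
        = ricci n Γ x Y (Γ x X a) + ricci n Γ x Y (Γ x X b) := by
      rw [map_add (Γ x X)]; exact (ricci_lin2 Γ x Y).map_add _ _
    rw [e0, e1, e2]; ring
  · intro c a
    show fderiv ℝ (fun p => ricci n Γ p Y (c • a)) x X - ricci n Γ x (Γ x X Y) (c • a)
        - ricci n Γ x Y (Γ x X (c • a))
      = c • (fderiv ℝ (fun p => ricci n Γ p Y a) x X - ricci n Γ x (Γ x X Y) a
          - ricci n Γ x Y (Γ x X a))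
    have hfun : (fun p => ricci n Γ p Y (c • a))
        = fun p => c * ricci n Γ p Y a :=
      funext fun p => (ricci_lin2 Γ p Y).map_smul c a
    have e0 : fderiv ℝ (fun p => ricci n Γ p Y (c • a)) x X
        = c * fderiv ℝ (fun p => ricci n Γ p Y a) x X := by
      rw [hfun, fderiv_const_mul (hdiff Y a) c]; rfl
    have e1 : ricci n Γ x (Γ x X Y) (c • a) = c * ricci n Γ x (Γ x X Y) a :=
      (ricci_lin2 Γ x (Γ x X Y)).map_smul _ _
    have e2 : ricci n Γ x Y (Γ x X (c • a)) = c * ricci n Γ x Y (Γ x X a) := by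
      rw [map_smul (Γ x X)]; exact (ricci_lin2 Γ x Y).map_smul _ _
    rw [e0, e1, e2]; simp only [smul_eq_mul]; ring

def uu (Γ : V n → V n →L[ℝ] V n →L[ℝ] V n) (x A : V n) : ℝ :=
  ∑ i : Fin n, (nablaRicci n Γ x (ee (lo i)) A (ee (hi i))
    - nablaRicci n Γ x (ee (hi i)) A (ee (lo i)))


lemma dagger (hn : 2 ≤ n) (hΓ : ContDiff ℝ (⊤:ℕ∞) Γ)
    (hsym₁ : ∀ x X Y Z, Omega n (Γ x X Y) Z = Omega n (Γ x Y X) Z)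
    (hsym₂ : ∀ x X Y Z, Omega n (Γ x X Y) Z = Omega n (Γ x X Z) Y)
    (hR : IsRicciType n Γ) (x X Y W : V n) :
    (2*(n:ℝ)+1) * (nablaRicci n Γ x Y X W - nablaRicci n Γ x X Y W)
      + 2 * Omega n X Y * uu Γ x W + Omega n X W * uu Γ x Y
      - Omega n Y W * uu Γ x X = 0 := by
  have hsum : (∑ i : Fin n,
      (2 * (Omega n Y (ee (lo i)) * nablaRicci n Γ x X W (ee (hi i))
          - Omega n Y (ee (hi i)) * nablaRicci n Γ x X W (ee (lo i)))
       + Omega n Y W * (nablaRicci n Γ x X (ee (lo i)) (ee (hi i))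
          - nablaRicci n Γ x X (ee (hi i)) (ee (lo i)))
       + (nablaRicci n Γ x X (ee (lo i)) W * Omega n Y (ee (hi i))
          - nablaRicci n Γ x X (ee (hi i)) W * Omega n Y (ee (lo i)))
       - (Omega n (ee (lo i)) W * nablaRicci n Γ x X Y (ee (hi i))
          - Omega n (ee (hi i)) W * nablaRicci n Γ x X Y (ee (lo i)))
       - (Omega n (ee (lo i)) (ee (hi i)) * nablaRicci n Γ x X Y W
          - Omega n (ee (hi i)) (ee (lo i)) * nablaRicci n Γ x X Y W)
       + 2 * (Omega n (ee (lo i)) X * nablaRicci n Γ x Y W (ee (hi i))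
          - Omega n (ee (hi i)) X * nablaRicci n Γ x Y W (ee (lo i)))
       + (Omega n (ee (lo i)) W * nablaRicci n Γ x Y X (ee (hi i))
          - Omega n (ee (hi i)) W * nablaRicci n Γ x Y X (ee (lo i)))
       + (Omega n (ee (lo i)) (ee (hi i)) * nablaRicci n Γ x Y X W
          - Omega n (ee (hi i)) (ee (lo i)) * nablaRicci n Γ x Y X W)
       - Omega n X W * (nablaRicci n Γ x Y (ee (lo i)) (ee (hi i))
          - nablaRicci n Γ x Y (ee (hi i)) (ee (lo i)))
       - (nablaRicci n Γ x Y (ee (lo i)) W * Omega n X (ee (hi i))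
          - nablaRicci n Γ x Y (ee (hi i)) W * Omega n X (ee (lo i)))
       + 2 * Omega n X Y * (nablaRicci n Γ x (ee (lo i)) W (ee (hi i))
          - nablaRicci n Γ x (ee (hi i)) W (ee (lo i)))
       + Omega n X W * (nablaRicci n Γ x (ee (lo i)) Y (ee (hi i))
          - nablaRicci n Γ x (ee (hi i)) Y (ee (lo i)))
       + (nablaRicci n Γ x (ee (lo i)) Y W * Omega n X (ee (hi i))
          - nablaRicci n Γ x (ee (hi i)) Y W * Omega n X (ee (lo i)))
       - Omega n Y W * (nablaRicci n Γ x (ee (lo i)) X (ee (hi i))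
          - nablaRicci n Γ x (ee (hi i)) X (ee (lo i)))
       - (nablaRicci n Γ x (ee (lo i)) X W * Omega n Y (ee (hi i))
          - nablaRicci n Γ x (ee (hi i)) X W * Omega n Y (ee (lo i))))) = 0 := by
    refine Finset.sum_eq_zero (fun i _ => ?_)
    have h1 := star Γ hn hΓ hsym₁ hsym₂ hR x X Y (ee (lo i)) W (ee (hi i))
    have h2 := star Γ hn hΓ hsym₁ hsym₂ hR x X Y (ee (hi i)) W (ee (lo i))
    linear_combination h1 - h2
  -- group evaluations
  have G1 : ∑ i : Fin n, (2 * (Omega n Y (ee (lo i)) * nablaRicci n Γ x X W (ee (hi i))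
      - Omega n Y (ee (hi i)) * nablaRicci n Γ x X W (ee (lo i))))
      = 2 * -(nablaRicci n Γ x X W Y) := by
    rw [← Finset.mul_sum,
      contract_a (fun v => nablaRicci n Γ x X W v) (nabla_lin3 Γ hΓ x X W) Y]
  have G2 : ∑ i : Fin n, (Omega n Y W * (nablaRicci n Γ x X (ee (lo i)) (ee (hi i))
      - nablaRicci n Γ x X (ee (hi i)) (ee (lo i)))) = 0 :=
    Finset.sum_eq_zero (fun i _ => by
      rw [nabla_symm23 Γ hR x X (ee (lo i)) (ee (hi i))]; ring)
  have G3 : ∑ i : Fin n, (nablaRicci n Γ x X (ee (lo i)) W * Omega n Y (ee (hi i))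
      - nablaRicci n Γ x X (ee (hi i)) W * Omega n Y (ee (lo i)))
      = nablaRicci n Γ x X Y W :=
    contract_b (fun v => nablaRicci n Γ x X v W) (nabla_lin2 Γ hΓ x X W) Y
  have G4 : ∑ i : Fin n, (Omega n (ee (lo i)) W * nablaRicci n Γ x X Y (ee (hi i))
      - Omega n (ee (hi i)) W * nablaRicci n Γ x X Y (ee (lo i)))
      = nablaRicci n Γ x X Y W :=
    contract_c (fun v => nablaRicci n Γ x X Y v) (nabla_lin3 Γ hΓ x X Y) W
  have Gconst : ∀ P : ℝ, ∑ i : Fin n, (Omega n (ee (lo i)) (ee (hi i)) * P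
      - Omega n (ee (hi i)) (ee (lo i)) * P) = (n:ℝ) * (2 * P) := by
    intro P
    calc ∑ i : Fin n, (Omega n (ee (lo i)) (ee (hi i)) * P
        - Omega n (ee (hi i)) (ee (lo i)) * P)
        = ∑ _i : Fin n, 2 * P := Finset.sum_congr rfl (fun i _ => by
          rw [omega_lo_hi i, omega_hi_lo i]; ring)
      _ = (n:ℝ) * (2 * P) := by
          rw [Finset.sum_const, Finset.card_univ, Fintype.card_fin, nsmul_eq_mul]
  have G5 := Gconst (nablaRicci n Γ x X Y W)
  have G8 := Gconst (nablaRicci n Γ x Y X W)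
  have G6 : ∑ i : Fin n, (2 * (Omega n (ee (lo i)) X * nablaRicci n Γ x Y W (ee (hi i))
      - Omega n (ee (hi i)) X * nablaRicci n Γ x Y W (ee (lo i))))
      = 2 * nablaRicci n Γ x Y W X := by
    rw [← Finset.mul_sum,
      contract_c (fun v => nablaRicci n Γ x Y W v) (nabla_lin3 Γ hΓ x Y W) X]
  have G7 : ∑ i : Fin n, (Omega n (ee (lo i)) W * nablaRicci n Γ x Y X (ee (hi i))
      - Omega n (ee (hi i)) W * nablaRicci n Γ x Y X (ee (lo i)))
      = nablaRicci n Γ x Y X W :=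
    contract_c (fun v => nablaRicci n Γ x Y X v) (nabla_lin3 Γ hΓ x Y X) W
  have G9 : ∑ i : Fin n, (Omega n X W * (nablaRicci n Γ x Y (ee (lo i)) (ee (hi i))
      - nablaRicci n Γ x Y (ee (hi i)) (ee (lo i)))) = 0 :=
    Finset.sum_eq_zero (fun i _ => by
      rw [nabla_symm23 Γ hR x Y (ee (lo i)) (ee (hi i))]; ring)
  have G10 : ∑ i : Fin n, (nablaRicci n Γ x Y (ee (lo i)) W * Omega n X (ee (hi i))
      - nablaRicci n Γ x Y (ee (hi i)) W * Omega n X (ee (lo i)))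
      = nablaRicci n Γ x Y X W :=
    contract_b (fun v => nablaRicci n Γ x Y v W) (nabla_lin2 Γ hΓ x Y W) X
  have G11 : ∑ i : Fin n, (2 * Omega n X Y * (nablaRicci n Γ x (ee (lo i)) W (ee (hi i))
      - nablaRicci n Γ x (ee (hi i)) W (ee (lo i))))
      = 2 * Omega n X Y * uu Γ x W := by
    rw [← Finset.mul_sum]; rfl
  have G12 : ∑ i : Fin n, (Omega n X W * (nablaRicci n Γ x (ee (lo i)) Y (ee (hi i))
      - nablaRicci n Γ x (ee (hi i)) Y (ee (lo i))))
      = Omega n X W * uu Γ x Y := by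
    rw [← Finset.mul_sum]; rfl
  have G13 : ∑ i : Fin n, (nablaRicci n Γ x (ee (lo i)) Y W * Omega n X (ee (hi i))
      - nablaRicci n Γ x (ee (hi i)) Y W * Omega n X (ee (lo i)))
      = nablaRicci n Γ x X Y W :=
    contract_b (fun v => nablaRicci n Γ x v Y W) (nabla_lin1 Γ x Y W) X
  have G14 : ∑ i : Fin n, (Omega n Y W * (nablaRicci n Γ x (ee (lo i)) X (ee (hi i))
      - nablaRicci n Γ x (ee (hi i)) X (ee (lo i))))
      = Omega n Y W * uu Γ x X := by
    rw [← Finset.mul_sum]; rfl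
  have G15 : ∑ i : Fin n, (nablaRicci n Γ x (ee (lo i)) X W * Omega n Y (ee (hi i))
      - nablaRicci n Γ x (ee (hi i)) X W * Omega n Y (ee (lo i)))
      = nablaRicci n Γ x Y X W :=
    contract_b (fun v => nablaRicci n Γ x v X W) (nabla_lin1 Γ x X W) Y
  -- distribute the big sum
  rw [Finset.sum_sub_distrib, Finset.sum_sub_distrib, Finset.sum_add_distrib,
    Finset.sum_add_distrib, Finset.sum_add_distrib, Finset.sum_sub_distrib,
    Finset.sum_sub_distrib, Finset.sum_add_distrib, Finset.sum_add_distrib,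
    Finset.sum_add_distrib, Finset.sum_sub_distrib, Finset.sum_sub_distrib,
    Finset.sum_add_distrib, Finset.sum_add_distrib] at hsum
  rw [G1, G2, G3, G4, G5, G6, G7, G8, G9, G10, G11, G12, G13, G14, G15] at hsum
  have s1 : nablaRicci n Γ x X W Y = nablaRicci n Γ x X Y W := nabla_symm23 Γ hR x X W Y
  have s2 : nablaRicci n Γ x Y W X = nablaRicci n Γ x Y X W := nabla_symm23 Γ hR x Y W X
  linear_combination hsum + 2 * s1 - 2 * s2


lemma starB (g : V n → ℝ) (X Y Z W T : V n) :
    (2 * Omega n Y Z * (Omega n X W * g T + Omega n X T * g W)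
      + Omega n Y W * (Omega n X Z * g T + Omega n X T * g Z)
      + Omega n Y T * (Omega n X Z * g W + Omega n X W * g Z)
      - Omega n Z W * (Omega n X Y * g T + Omega n X T * g Y)
      - Omega n Z T * (Omega n X Y * g W + Omega n X W * g Y))
    + (2 * Omega n Z X * (Omega n Y W * g T + Omega n Y T * g W)
      + Omega n Z W * (Omega n Y X * g T + Omega n Y T * g X)
      + Omega n Z T * (Omega n Y X * g W + Omega n Y W * g X)
      - Omega n X W * (Omega n Y Z * g T + Omega n Y T * g Z)
      - Omega n X T * (Omega n Y Z * g W + Omega n Y W * g Z))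
    + (2 * Omega n X Y * (Omega n Z W * g T + Omega n Z T * g W)
      + Omega n X W * (Omega n Z Y * g T + Omega n Z T * g Y)
      + Omega n X T * (Omega n Z Y * g W + Omega n Z W * g Y)
      - Omega n Y W * (Omega n Z X * g T + Omega n Z T * g X)
      - Omega n Y T * (Omega n Z X * g W + Omega n Z W * g X)) = 0 := by
  rw [omega_anti Y X, omega_anti Z X, omega_anti Z Y]
  ring

lemma Asym12 (hn : 2 ≤ n) (hΓ : ContDiff ℝ (⊤:ℕ∞) Γ)
    (hsym₁ : ∀ x X Y Z, Omega n (Γ x X Y) Z = Omega n (Γ x Y X) Z)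
    (hsym₂ : ∀ x X Y Z, Omega n (Γ x X Y) Z = Omega n (Γ x X Z) Y)
    (hR : IsRicciType n Γ) (x X Y W : V n) :
    (2*(n:ℝ)+1) * nablaRicci n Γ x X Y W
        - (Omega n X Y * uu Γ x W + Omega n X W * uu Γ x Y)
      = (2*(n:ℝ)+1) * nablaRicci n Γ x Y X W
        - (Omega n Y X * uu Γ x W + Omega n Y W * uu Γ x X) := by
  linear_combination (-1 : ℝ) * dagger Γ hn hΓ hsym₁ hsym₂ hR x X Y W
    + uu Γ x W * omega_anti Y X

lemma Qlem (hn : 2 ≤ n) (hΓ : ContDiff ℝ (⊤:ℕ∞) Γ)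
    (hsym₁ : ∀ x X Y Z, Omega n (Γ x X Y) Z = Omega n (Γ x Y X) Z)
    (hsym₂ : ∀ x X Y Z, Omega n (Γ x X Y) Z = Omega n (Γ x X Z) Y)
    (hR : IsRicciType n Γ) (x X Y Z W : V n) :
    Omega n Y Z * ((2*(n:ℝ)+1) * nablaRicci n Γ x X W W - 2 * Omega n X W * uu Γ x W)
    + Omega n Z X * ((2*(n:ℝ)+1) * nablaRicci n Γ x Y W W - 2 * Omega n Y W * uu Γ x W)
    + Omega n X Y * ((2*(n:ℝ)+1) * nablaRicci n Γ x Z W W - 2 * Omega n Z W * uu Γ x W)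
    = 0 := by
  have hs := star Γ hn hΓ hsym₁ hsym₂ hR x X Y Z W W
  have hB := starB (uu Γ x) X Y Z W W
  have e1 := Asym12 Γ hn hΓ hsym₁ hsym₂ hR x X Z W
  have e2 := Asym12 Γ hn hΓ hsym₁ hsym₂ hR x Y X W
  have e3 := Asym12 Γ hn hΓ hsym₁ hsym₂ hR x Z Y W
  linear_combination ((2*(n:ℝ)+1)/2) * hs - (1/2 : ℝ) * hB
    - Omega n Y W * e1 - Omega n Z W * e2 - Omega n X W * e3

lemma AWW (hn : 2 ≤ n) (hΓ : ContDiff ℝ (⊤:ℕ∞) Γ)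
    (hsym₁ : ∀ x X Y Z, Omega n (Γ x X Y) Z = Omega n (Γ x Y X) Z)
    (hsym₂ : ∀ x X Y Z, Omega n (Γ x X Y) Z = Omega n (Γ x X Z) Y)
    (hR : IsRicciType n Γ) (x W U : V n) :
    (2*(n:ℝ)+1) * nablaRicci n Γ x U W W - 2 * Omega n U W * uu Γ x W = 0 := by
  have hφ : IsLinearMap ℝ (fun v => (2*(n:ℝ)+1) * nablaRicci n Γ x v W W
      - 2 * Omega n v W * uu Γ x W) := by
    constructor
    · intro a b
      rw [(nabla_lin1 Γ x W W).map_add a b, omega_add_left]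
      ring
    · intro c a
      rw [(nabla_lin1 Γ x W W).map_smul c a, omega_smul_left]
      simp only [smul_eq_mul]
      ring
  have hbasis : ∀ a : Fin (2*n), (2*(n:ℝ)+1) * nablaRicci n Γ x (ee a) W W
      - 2 * Omega n (ee a) W * uu Γ x W = 0 := by
    intro a
    have key : ∀ j : Fin n, j.1 ≠ a.1 → n + j.1 ≠ a.1 →
        (2*(n:ℝ)+1) * nablaRicci n Γ x (ee a) W W
          - 2 * Omega n (ee a) W * uu Γ x W = 0 := by
      intro j hj1 hj2
      have h := Qlem Γ hn hΓ hsym₁ hsym₂ hR x (ee a) (ee (lo j)) (ee (hi j)) W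
      rw [omega_lo_hi j, omega_hi_left, omega_right_lo] at h
      have hz1 : ee (n := n) a (lo j) = 0 := by
        rw [ee_apply, if_neg]
        simp only [lo]
        omega
      have hz2 : ee (n := n) a (hi j) = 0 := by
        rw [ee_apply, if_neg]
        simp only [hi]
        omega
      rw [hz1, hz2] at h
      linarith
    by_cases hc : a.1 = 0 ∨ a.1 = n
    · exact key ⟨1, by omega⟩ (by simp; omega) (by simp; omega)
    · push_neg at hc
      exact key ⟨0, by omega⟩ (by simp; omega) (by simp; omega)
  have := expand_lin _ hφ U
  rw [this, Finset.sum_eq_zero (fun a _ => by rw [hbasis a]; ring)]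

lemma uu_lin (hΓ : ContDiff ℝ (⊤:ℕ∞) Γ) (x : V n) : IsLinearMap ℝ (uu Γ x) := by
  constructor
  · intro a b
    unfold uu
    rw [← Finset.sum_add_distrib]
    refine Finset.sum_congr rfl (fun i _ => ?_)
    rw [(nabla_lin2 Γ hΓ x (ee (lo i)) (ee (hi i))).map_add a b,
      (nabla_lin2 Γ hΓ x (ee (hi i)) (ee (lo i))).map_add a b]
    ring
  · intro c a
    unfold uu
    rw [smul_eq_mul, Finset.mul_sum]
    refine Finset.sum_congr rfl (fun i _ => ?_)
    rw [(nabla_lin2 Γ hΓ x (ee (lo i)) (ee (hi i))).map_smul c a,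
      (nabla_lin2 Γ hΓ x (ee (hi i)) (ee (lo i))).map_smul c a]
    simp only [smul_eq_mul]
    ring

lemma final_id (hn : 2 ≤ n) (hΓ : ContDiff ℝ (⊤:ℕ∞) Γ)
    (hsym₁ : ∀ x X Y Z, Omega n (Γ x X Y) Z = Omega n (Γ x Y X) Z)
    (hsym₂ : ∀ x X Y Z, Omega n (Γ x X Y) Z = Omega n (Γ x X Z) Y)
    (hR : IsRicciType n Γ) (x X Y Z : V n) :
    (2*(n:ℝ)+1) * nablaRicci n Γ x X Y Z
      = Omega n X Y * uu Γ x Z + Omega n X Z * uu Γ x Y := by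
  have h1 := AWW Γ hn hΓ hsym₁ hsym₂ hR x (Y + Z) X
  have h2 := AWW Γ hn hΓ hsym₁ hsym₂ hR x Y X
  have h3 := AWW Γ hn hΓ hsym₁ hsym₂ hR x Z X
  have e1 : nablaRicci n Γ x X (Y + Z) (Y + Z)
      = nablaRicci n Γ x X Y Y + nablaRicci n Γ x X Y Z
        + nablaRicci n Γ x X Z Y + nablaRicci n Γ x X Z Z := by
    rw [(nabla_lin2 Γ hΓ x X (Y + Z)).map_add Y Z,
      (nabla_lin3 Γ hΓ x X Y).map_add Y Z, (nabla_lin3 Γ hΓ x X Z).map_add Y Z]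
    ring
  have e2 : Omega n X (Y + Z) = Omega n X Y + Omega n X Z := omega_add_right Y Z X
  have e3 : uu Γ x (Y + Z) = uu Γ x Y + uu Γ x Z := (uu_lin Γ hΓ x).map_add Y Z
  have e4 : nablaRicci n Γ x X Z Y = nablaRicci n Γ x X Y Z := by
    rw [nabla_symm23 Γ hR x X Z Y]
  rw [e1, e2, e3, e4] at h1
  linarith [h1, h2, h3]

end Aux

/-- For a symplectic connection `∇ = ∇⁰ + Γ` of Ricci type on `(ℝ^{2n},Ω)`,
`n ≥ 2`, there is a smooth 1-form `u` with
`(∇_X r)(x)(Y,Z) = (1/(2n+1))·(Ω(X,Y)u(x)(Z) + Ω(X,Z)u(x)(Y))`. -/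
theorem ricci_type_nabla_ricci (n : ℕ) (hn : 2 ≤ n)
    (Γ : (Fin (2*n) → ℝ) → (Fin (2*n) → ℝ) →L[ℝ] (Fin (2*n) → ℝ) →L[ℝ] (Fin (2*n) → ℝ))
    (hΓ : ContDiff ℝ (⊤ : ℕ∞) Γ)
    (hsym₁ : ∀ x X Y Z, Omega n (Γ x X Y) Z = Omega n (Γ x Y X) Z)
    (hsym₂ : ∀ x X Y Z, Omega n (Γ x X Y) Z = Omega n (Γ x X Z) Y)
    (hR : IsRicciType n Γ) :
    ∃ u : (Fin (2*n) → ℝ) → ((Fin (2*n) → ℝ) →L[ℝ] ℝ),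
      ContDiff ℝ (⊤ : ℕ∞) u ∧
      ∀ x X Y Z, nablaRicci n Γ x X Y Z =
        (1/(2*(n:ℝ)+1)) * (Omega n X Y * u x Z + Omega n X Z * u x Y) := by
  classical
  refine ⟨fun x => ∑ a : Fin (2*n), Aux.uu Γ x (Aux.ee a) •
    ContinuousLinearMap.proj (R := ℝ) (φ := fun _ : Fin (2*n) => ℝ) a, ?_, ?_⟩
  · apply ContDiff.sum
    intro a _
    have hs : ContDiff ℝ (⊤:ℕ∞) (fun x => Aux.uu Γ x (Aux.ee a)) := by
      unfold Aux.uu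
      apply ContDiff.sum
      intro i _
      exact (Aux.contDiff_nabla Γ hΓ _ _ _).sub (Aux.contDiff_nabla Γ hΓ _ _ _)
    exact hs.smul contDiff_const
  · intro x X Y Z
    have happ : ∀ W' : Fin (2*n) → ℝ,
        (∑ a : Fin (2*n), Aux.uu Γ x (Aux.ee a) •
          ContinuousLinearMap.proj (R := ℝ) (φ := fun _ : Fin (2*n) => ℝ) a) W'
        = Aux.uu Γ x W' := by
      intro W'
      simp only [ContinuousLinearMap.sum_apply, ContinuousLinearMap.smul_apply,
        ContinuousLinearMap.proj_apply, smul_eq_mul]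
      rw [Aux.expand_lin (Aux.uu Γ x) (Aux.uu_lin Γ hΓ x) W']
      exact Finset.sum_congr rfl (fun a _ => mul_comm _ _)
    rw [happ Z, happ Y]
    have h := Aux.final_id Γ hn hΓ hsym₁ hsym₂ hR x X Y Z
    have hne : (2*(n:ℝ)+1) ≠ 0 := by positivity
    field_simp
    linear_combination h
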